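/- Let F_q be a finite field, let α_1,…,α_r be distinct elements of F_q, let 1 ≤ t ≤ rs, let P ∈ F_q[X] have degree at most t−1, let y = (y_{j,i}) ∈ Mat_{s×r}(F_q), and let e be an integer with e ≥ ω_N(y − EV_{A,1}(P)), where EV_{A,1}(P) is the s×r matrix with (i,j) entry ∂^(i−1)P(α_j). Then there exist polynomials E, N ∈ F_q[X] with deg E = e exactly, deg N ≤ e + t − 1, N = E·P, and such that for all 1 ≤ i ≤ r and 1 ≤ ℓ ≤ s, ∂^(ℓ−1)N(α_i) = Σ_{j=1}^{ℓ} y_{j,i} · ∂^(ℓ−j)E(α_i). -/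

import Mathlib

open Polynomial

/-- The NRT weight of a column vector of height `s`: it is `0` for the zero column, and
`s - i + 1` (1-based) when the topmost nonzero entry is in row `i`; with 0-based indexing this
is the maximum of `s - i` over indices `i` with a nonzero entry. -/
def nrtColWt {F : Type*} [Zero F] [DecidableEq F] {s : ℕ} (col : Fin s → F) : ℕ :=
  (Finset.univ.filter fun i => col i ≠ 0).sup fun i => s - i.val

/-- The NRT weight of an `s × r` matrix: the sum of the NRT weights of its columns. -/
def nrtWt {F : Type*} [Zero F] [DecidableEq F] {s r : ℕ}
    (A : Matrix (Fin s) (Fin r) F) : ℕ :=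
  ∑ j, nrtColWt fun i => A i j

/-- The evaluation map of hyperderivative Reed–Solomon codes: the `(i, j)` entry of
`EVmat α V f` is `V i j * ∂^(i) f (α j)` (0-based hyperderivative order). -/
noncomputable def EVmat {F : Type*} [Semiring F] {s r : ℕ} (α : Fin r → F)
    (V : Matrix (Fin s) (Fin r) F) (f : Polynomial F) : Matrix (Fin s) (Fin r) F :=
  Matrix.of fun i j => V i j * (Polynomial.hasseDeriv i.val f).eval (α j)

/-- If `(X - a)^m` divides `E` and `k < m`, the `k`-th hyperderivative of `E` vanishes at `a`. -/
lemma eval_hasseDeriv_eq_zero_of_pow_dvd {F : Type*} [CommRing F] {a : F} {m k : ℕ}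
    {E : Polynomial F} (h : (X - C a) ^ m ∣ E) (hk : k < m) :
    (Polynomial.hasseDeriv k E).eval a = 0 := by
  obtain ⟨g, rfl⟩ := h
  rw [← taylor_coeff]
  have hX : taylor a ((X - C a) ^ m * g) = X ^ m * taylor a g := by
    rw [taylor_mul]
    congr 1
    rw [show taylor a ((X - C a) ^ m) = taylorAlgHom a ((X - C a) ^ m) from rfl, map_pow]
    rw [map_sub]
    change (taylor a X - taylor a (C a)) ^ m = X ^ m
    simp [taylor_X, taylor_C]
  rw [hX]
  exact (X_pow_dvd_iff.mp (dvd_mul_right _ _)) k hk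

/-- **existence of a Welch–Berlekamp solution.** -/
theorem welchBerlekamp_solution_exists {F : Type*} [Field F] [Fintype F] [DecidableEq F]
    {s r : ℕ} (α : Fin r → F) (hα : Function.Injective α)
    (t : ℕ) (ht1 : 1 ≤ t) (ht2 : t ≤ r * s)
    (P : Polynomial F) (hP : P.degree < (t : ℕ))
    (y : Matrix (Fin s) (Fin r) F) (e : ℕ)
    (he : nrtWt (y - EVmat α (Matrix.of fun _ _ => (1 : F)) P) ≤ e) :
    ∃ E N : Polynomial F,
      E.degree = (e : ℕ) ∧
      N.degree ≤ ((e + t - 1 : ℕ) : WithBot ℕ) ∧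
      N = E * P ∧
      ∀ (i : Fin r) (ℓ : Fin s),
        (Polynomial.hasseDeriv ℓ.val N).eval (α i) =
          ∑ j ∈ Finset.Iic ℓ,
            y j i * (Polynomial.hasseDeriv (ℓ.val - j.val) E).eval (α i) := by
  classical
  set Δ : Matrix (Fin s) (Fin r) F := y - EVmat α (Matrix.of fun _ _ => (1 : F)) P with hΔ
  set m : Fin r → ℕ := fun i => nrtColWt (fun j => Δ j i) with hm
  have hM : ∑ i, m i ≤ e := he
  set E : Polynomial F := X ^ (e - ∑ i, m i) * ∏ i, (X - C (α i)) ^ (m i) with hE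
  have hEmonic : E.Monic := by
    apply (monic_X_pow _).mul
    exact monic_prod_of_monic _ _ fun i _ => (monic_X_sub_C _).pow _
  have hEdeg : E.degree = (e : ℕ) := by
    rw [degree_eq_natDegree hEmonic.ne_zero]
    congr 1
    rw [hE, natDegree_mul (pow_ne_zero _ X_ne_zero)
      (Finset.prod_ne_zero_iff.mpr fun i _ => pow_ne_zero _ (X_sub_C_ne_zero _)),
      natDegree_X_pow, natDegree_prod _ _ fun i _ => pow_ne_zero _ (X_sub_C_ne_zero _)]
    simp only [natDegree_pow, natDegree_X_sub_C, mul_one]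
    omega
  have hdvd : ∀ i : Fin r, (X - C (α i)) ^ (m i) ∣ E := fun i =>
    Dvd.dvd.mul_left (Finset.dvd_prod_of_mem _ (Finset.mem_univ i)) _
  have hvanish : ∀ (i : Fin r) (k : ℕ), k < m i → (hasseDeriv k E).eval (α i) = 0 :=
    fun i k hk => eval_hasseDeriv_eq_zero_of_pow_dvd (hdvd i) hk
  refine ⟨E, E * P, hEdeg, ?_, rfl, ?_⟩
  · calc (E * P).degree ≤ E.degree + P.degree := degree_mul_le _ _
      _ ≤ ((e : ℕ) : WithBot ℕ) + ((t - 1 : ℕ) : WithBot ℕ) := by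
          apply add_le_add hEdeg.le
          rcases eq_or_ne P 0 with rfl | h0
          · simp
          · rw [degree_eq_natDegree h0] at hP ⊢
            exact_mod_cast Nat.le_sub_one_of_lt (by exact_mod_cast hP)
      _ = ((e + t - 1 : ℕ) : WithBot ℕ) := by
          rw [← Nat.cast_add]; congr 1; omega
  · intro i ℓ
    have key : ∀ j : Fin s, j ∈ Finset.Iic ℓ →
        y j i * (hasseDeriv (ℓ.val - j.val) E).eval (α i)
          = (hasseDeriv j.val P).eval (α i) * (hasseDeriv (ℓ.val - j.val) E).eval (α i) := by
      intro j hj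
      have hjl : j.val ≤ ℓ.val := Fin.le_def.mp (Finset.mem_Iic.mp hj)
      rcases eq_or_ne (Δ j i) 0 with h0 | h0
      · have hy : y j i = (hasseDeriv j.val P).eval (α i) := by
          have h1 : y j i - (1 : F) * (hasseDeriv j.val P).eval (α i) = 0 := h0
          rw [one_mul] at h1
          exact sub_eq_zero.mp h1
        rw [hy]
      · have hw : s - j.val ≤ m i := by
          apply Finset.le_sup (f := fun i' : Fin s => s - i'.val)
          simp only [Finset.mem_filter, Finset.mem_univ, true_and]
          exact h0
        have hlt : ℓ.val - j.val < m i := by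
          have h1 := ℓ.isLt
          have h2 := j.isLt
          omega
        rw [hvanish i _ hlt, mul_zero, mul_zero]
    have h1 : (hasseDeriv ℓ.val (E * P)).eval (α i)
        = ∑ k ∈ Finset.range (ℓ.val + 1),
            (hasseDeriv k E).eval (α i) * (hasseDeriv (ℓ.val - k) P).eval (α i) := by
      rw [hasseDeriv_mul, eval_finset_sum]
      simp only [eval_mul]
      exact Finset.Nat.sum_antidiagonal_eq_sum_range_succ_mk _ _
    have h2 : ∑ k ∈ Finset.range (ℓ.val + 1),
          (hasseDeriv k E).eval (α i) * (hasseDeriv (ℓ.val - k) P).eval (α i)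
        = ∑ k ∈ Finset.range (ℓ.val + 1),
          (hasseDeriv k P).eval (α i) * (hasseDeriv (ℓ.val - k) E).eval (α i) := by
      rw [← Finset.sum_range_reflect]
      apply Finset.sum_congr rfl
      intro k hk
      rw [Finset.mem_range] at hk
      have hkl : k ≤ ℓ.val := Nat.lt_succ_iff.mp hk
      rw [show ℓ.val + 1 - 1 - k = ℓ.val - k from by omega,
          show ℓ.val - (ℓ.val - k) = k from by omega, mul_comm]
    have h3 : ∑ j ∈ Finset.Iic ℓ,
          (hasseDeriv j.val P).eval (α i) * (hasseDeriv (ℓ.val - j.val) E).eval (α i)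
        = ∑ k ∈ Finset.range (ℓ.val + 1),
          (hasseDeriv k P).eval (α i) * (hasseDeriv (ℓ.val - k) E).eval (α i) := by
      refine Finset.sum_bij' (fun (j : Fin s) _ => j.val)
        (fun k hk => (⟨k, Nat.lt_of_le_of_lt
          (Nat.lt_succ_iff.mp (Finset.mem_range.mp hk)) ℓ.isLt⟩ : Fin s))
        ?_ ?_ ?_ ?_ ?_
      · intro j hj
        exact Finset.mem_range.mpr (Nat.lt_succ_of_le (Fin.le_def.mp (Finset.mem_Iic.mp hj)))
      · intro k hk
        exact Finset.mem_Iic.mpr (Fin.le_def.mpr (Nat.lt_succ_iff.mp (Finset.mem_range.mp hk)))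
      · intro j hj; rfl
      · intro k hk; rfl
      · intro j hj; rfl
    rw [Finset.sum_congr rfl key, h3, h1, h2]
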